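/- For every real number σ > 0, ∫_{-∞}^{-1} e^p/p dp - ∫₀^{-1} (e^p - 1)/p dp = γ, where γ is the Euler–Mascheroni constant. -/

import Mathlib

open MeasureTheory Real Set Filter Topology

lemma key_int : ∫ t in Set.Ioi (0:ℝ), Real.log t * Real.exp (-t)
    = -Real.eulerMascheroniConstant := by
  have h0 := Complex.hasDerivAt_GammaIntegral (s := 1) (by norm_num)
  have heq : (∫ t : ℝ in Ioi 0, (t : ℂ) ^ ((1:ℂ) - 1) * (Real.log t * Real.exp (-t)))
      = ((∫ t : ℝ in Ioi 0, Real.log t * Real.exp (-t) : ℝ) : ℂ) := by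
    have h1 : (∫ t : ℝ in Ioi 0, (t : ℂ) ^ ((1:ℂ) - 1) * (Real.log t * Real.exp (-t)))
        = ∫ t : ℝ in Ioi 0, ((Real.log t * Real.exp (-t) : ℝ) : ℂ) := by
      refine setIntegral_congr_fun measurableSet_Ioi fun t ht => ?_
      rw [sub_self, Complex.cpow_zero, one_mul]
      push_cast
      ring
    rw [h1]
    exact integral_ofReal
  rw [heq] at h0
  have hev : Complex.Gamma =ᶠ[𝓝 (1:ℂ)] Complex.GammaIntegral := by
    filter_upwards [(Complex.continuous_re.isOpen_preimage _ isOpen_Ioi).mem_nhds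
      (by norm_num : (1:ℂ) ∈ Complex.re ⁻¹' Ioi 0)] with z hz
    exact Complex.Gamma_eq_integral hz
  have hG := h0.congr_of_eventuallyEq hev
  have := hG.unique Complex.hasDerivAt_Gamma_one
  exact_mod_cast this

lemma intLogExp : IntegrableOn (fun t : ℝ => Real.log t * Real.exp (-t)) (Set.Ioi 0) := by
  have h := (mellin_hasDerivAt_of_isBigO_rpow (E := ℂ) (a := 2) (b := 0)
      (f := fun x : ℝ => ((Real.exp (-x) : ℝ) : ℂ)) (s := 1) ?_ ?_ (by norm_num) ?_
      (by norm_num)).1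
  · rw [MellinConvergent] at h
    have h2 : IntegrableOn (fun t : ℝ => ((Real.log t * Real.exp (-t) : ℝ) : ℂ)) (Ioi 0) := by
      refine h.congr_fun (fun t ht => ?_) measurableSet_Ioi
      dsimp only
      rw [sub_self, Complex.cpow_zero, one_smul, Complex.real_smul]
      push_cast
      ring
    have h3 := h2.re
    refine IntegrableOn.congr_fun h3 (fun t ht => ?_) measurableSet_Ioi
    exact RCLike.ofReal_re _
  · refine (Continuous.continuousOn ?_).locallyIntegrableOn measurableSet_Ioi
    exact Complex.continuous_ofReal.comp (Real.continuous_exp.comp continuous_neg)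
  · rw [← Asymptotics.isBigO_norm_left]
    simp_rw [Complex.norm_real,
      Asymptotics.isBigO_norm_left]
    simpa only [neg_one_mul] using (isLittleO_exp_neg_mul_rpow_atTop zero_lt_one _).isBigO
  · simp_rw [neg_zero, rpow_zero]
    refine Asymptotics.isBigO_const_of_tendsto (?_ : Tendsto _ _ (𝓝 (1 : ℂ))) one_ne_zero
    rw [(by simp : (1 : ℂ) = Real.exp (-0))]
    exact (Complex.continuous_ofReal.comp
      (Real.continuous_exp.comp continuous_neg)).continuousWithinAt

lemma intB : IntegrableOn (fun t : ℝ => Real.exp (-t) / t) (Set.Ioi 1) := by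
  refine Integrable.mono (exp_neg_integrableOn_Ioi 1 one_pos) ?_ ?_
  · refine (ContinuousOn.aestronglyMeasurable ?_ measurableSet_Ioi)
    exact ContinuousOn.div (Real.continuous_exp.comp continuous_neg).continuousOn
      continuousOn_id (fun x hx => (lt_of_lt_of_le zero_lt_one (le_of_lt hx)).ne')
  · filter_upwards [ae_restrict_mem measurableSet_Ioi] with t ht
    have ht1 : (1:ℝ) < t := ht
    have ht0 : (0:ℝ) < t := lt_trans zero_lt_one ht1
    rw [Real.norm_eq_abs, Real.norm_eq_abs, neg_one_mul, abs_of_pos (by positivity),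
      abs_of_pos (Real.exp_pos _)]
    rw [div_le_iff₀ ht0]
    nlinarith [Real.exp_pos (-t)]

lemma intA : IntegrableOn (fun t : ℝ => (1 - Real.exp (-t)) / t) (Set.Ioc 0 1) := by
  refine Measure.integrableOn_of_bounded (M := 1) measure_Ioc_lt_top.ne ?_ ?_
  · exact ((measurable_const.sub (Real.measurable_exp.comp measurable_neg)).div
      measurable_id).aestronglyMeasurable
  · filter_upwards [ae_restrict_mem measurableSet_Ioc] with t ht
    have ht0 : (0:ℝ) < t := ht.1
    have hnum0 : 0 ≤ 1 - Real.exp (-t) := by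
      have := Real.exp_le_one_iff.mpr (by linarith : -t ≤ 0)
      linarith
    have hnum1 : 1 - Real.exp (-t) ≤ t := by
      have := Real.add_one_le_exp (-t)
      linarith
    rw [Real.norm_eq_abs, abs_of_nonneg (by positivity)]
    rw [div_le_one ht0]
    exact hnum1

lemma ftc_Ioi : ∫ t in Set.Ioi (1:ℝ), Real.exp (-t) / t
    = ∫ t in Set.Ioi (1:ℝ), Real.log t * Real.exp (-t) := by
  have hLog1 : IntegrableOn (fun t : ℝ => Real.log t * Real.exp (-t)) (Set.Ioi 1) :=
    intLogExp.mono_set (Set.Ioi_subset_Ioi zero_le_one)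
  have hderiv : ∀ x ∈ Set.Ici (1:ℝ), HasDerivAt (fun t => Real.log t * Real.exp (-t))
      (Real.exp (-x) / x - Real.log x * Real.exp (-x)) x := by
    intro x hx
    have hx0 : (0:ℝ) < x := lt_of_lt_of_le zero_lt_one hx
    have h1 : HasDerivAt Real.log x⁻¹ x := Real.hasDerivAt_log hx0.ne'
    have h2 : HasDerivAt (fun t : ℝ => Real.exp (-t)) (-Real.exp (-x)) x := by
      simpa [Function.comp_def] using ((Real.hasDerivAt_exp (-x)).comp x (hasDerivAt_neg x))
    have := h1.mul h2
    exact this.congr_deriv (by ring)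
  have htop : Tendsto (fun t : ℝ => Real.log t * Real.exp (-t)) atTop (𝓝 0) := by
    have hb : Tendsto (fun t : ℝ => t ^ 1 * Real.exp (-t)) atTop (𝓝 0) :=
      tendsto_pow_mul_exp_neg_atTop_nhds_zero 1
    refine squeeze_zero' ?_ ?_ (by simpa using hb)
    · filter_upwards [eventually_ge_atTop (1:ℝ)] with t ht
      have : 0 ≤ Real.log t := Real.log_nonneg ht
      positivity
    · filter_upwards [eventually_ge_atTop (1:ℝ)] with t ht
      have h1 : Real.log t ≤ t := (Real.log_le_sub_one_of_pos
        (lt_of_lt_of_le zero_lt_one ht)).trans (by linarith)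
      have := Real.exp_pos (-t)
      have : Real.log t * Real.exp (-t) ≤ t * Real.exp (-t) := by nlinarith
      simpa using this
  have h := integral_Ioi_of_hasDerivAt_of_tendsto' hderiv (intB.sub hLog1) htop
  rw [integral_sub intB hLog1] at h
  simp only [Real.log_one, zero_mul, sub_zero, zero_sub] at h
  linarith [h]

lemma ftc_Ioc : (∫ t in Set.Ioc (0:ℝ) 1, (1 - Real.exp (-t)) / t)
    + ∫ t in Set.Ioc (0:ℝ) 1, Real.log t * Real.exp (-t) = 0 := by
  have hLog0 : IntegrableOn (fun t : ℝ => Real.log t * Real.exp (-t)) (Set.Ioc 0 1) :=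
    intLogExp.mono_set Set.Ioc_subset_Ioi_self
  have hderiv : ∀ x ∈ Set.Ioo (0:ℝ) 1, HasDerivAt (fun t => Real.log t * (1 - Real.exp (-t)))
      ((1 - Real.exp (-x)) / x + Real.log x * Real.exp (-x)) x := by
    intro x hx
    have hx0 : (0:ℝ) < x := hx.1
    have h1 : HasDerivAt Real.log x⁻¹ x := Real.hasDerivAt_log hx0.ne'
    have h2 : HasDerivAt (fun t : ℝ => 1 - Real.exp (-t)) (Real.exp (-x)) x := by
      have := ((Real.hasDerivAt_exp (-x)).comp x (hasDerivAt_neg x)).const_sub 1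
      simpa using this
    have := h1.mul h2
    exact this.congr_deriv (by ring)
  have hint : IntervalIntegrable
      (fun t => (1 - Real.exp (-t)) / t + Real.log t * Real.exp (-t)) volume 0 1 := by
    rw [intervalIntegrable_iff_integrableOn_Ioc_of_le zero_le_one]
    exact intA.add hLog0
  have ha : Tendsto (fun t : ℝ => Real.log t * (1 - Real.exp (-t))) (𝓝[>] 0) (𝓝 0) := by
    have hb : Tendsto (fun x : ℝ => Real.log x * x ^ (1:ℝ)) (𝓝[>] 0) (𝓝 0) :=
      tendsto_log_mul_rpow_nhdsGT_zero one_pos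
    simp only [Real.rpow_one] at hb
    refine tendsto_of_tendsto_of_tendsto_of_le_of_le' hb tendsto_const_nhds ?_ ?_
    · filter_upwards [Ioo_mem_nhdsGT_of_mem
        (by constructor <;> norm_num : (0:ℝ) ∈ Set.Ico 0 1)] with x hx
      have hx0 : (0:ℝ) < x := hx.1
      have hlog : Real.log x ≤ 0 := Real.log_nonpos hx0.le hx.2.le
      have hnum1 : 1 - Real.exp (-x) ≤ x := by
        have := Real.add_one_le_exp (-x)
        linarith
      nlinarith
    · filter_upwards [Ioo_mem_nhdsGT_of_mem
        (by constructor <;> norm_num : (0:ℝ) ∈ Set.Ico 0 1)] with x hx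
      have hx0 : (0:ℝ) < x := hx.1
      have hlog : Real.log x ≤ 0 := Real.log_nonpos hx0.le hx.2.le
      have hnum0 : 0 ≤ 1 - Real.exp (-x) := by
        have := Real.exp_le_one_iff.mpr (by linarith : -x ≤ 0)
        linarith
      nlinarith
  have hb : Tendsto (fun t : ℝ => Real.log t * (1 - Real.exp (-t))) (𝓝[<] 1) (𝓝 0) := by
    have hc : ContinuousAt (fun t : ℝ => Real.log t * (1 - Real.exp (-t))) 1 := by
      exact (Real.continuousAt_log one_ne_zero).mul (by fun_prop)
    have ht := (hc.continuousWithinAt (s := Set.Iio 1)).tendsto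
    simpa using ht
  have h := intervalIntegral.integral_eq_sub_of_hasDerivAt_of_tendsto zero_lt_one hderiv hint ha hb
  rw [intervalIntegral.integral_add
      ((intervalIntegrable_iff_integrableOn_Ioc_of_le zero_le_one).mpr intA)
      ((intervalIntegrable_iff_integrableOn_Ioc_of_le zero_le_one).mpr hLog0)] at h
  rw [intervalIntegral.integral_of_le zero_le_one, intervalIntegral.integral_of_le zero_le_one]
    at h
  simpa using h

theorem stmt_2 (σ : ℝ) (hσ : 0 < σ) :
    (∫ p in Set.Iic (-1 : ℝ), Real.exp p / p) - ∫ p in (0:ℝ)..(-1), (Real.exp p - 1) / p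
      = Real.eulerMascheroniConstant := by
  have hLog0 : IntegrableOn (fun t : ℝ => Real.log t * Real.exp (-t)) (Set.Ioc 0 1) :=
    intLogExp.mono_set Set.Ioc_subset_Ioi_self
  have hLog1 : IntegrableOn (fun t : ℝ => Real.log t * Real.exp (-t)) (Set.Ioi 1) :=
    intLogExp.mono_set (Set.Ioi_subset_Ioi zero_le_one)
  -- split the key integral
  have hsplit : (∫ t in Set.Ioc (0:ℝ) 1, Real.log t * Real.exp (-t))
      + ∫ t in Set.Ioi (1:ℝ), Real.log t * Real.exp (-t)
      = -Real.eulerMascheroniConstant := by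
    rw [← key_int, ← Set.Ioc_union_Ioi_eq_Ioi (zero_le_one (α := ℝ))]
    exact (setIntegral_union (Set.Ioc_disjoint_Ioi le_rfl) measurableSet_Ioi hLog0 hLog1).symm
  -- first integral: substitution p = -t
  have hT1 : (∫ p in Set.Iic (-1 : ℝ), Real.exp p / p)
      = -∫ t in Set.Ioi (1:ℝ), Real.exp (-t) / t := by
    rw [← integral_comp_neg_Ioi 1 (fun p => Real.exp p / p), ← integral_neg]
    refine setIntegral_congr_fun measurableSet_Ioi fun t ht => ?_
    rw [div_neg]
  -- second integral: substitution p = -t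
  have hT2 : (∫ p in (0:ℝ)..(-1), (Real.exp p - 1) / p)
      = -∫ t in Set.Ioc (0:ℝ) 1, (1 - Real.exp (-t)) / t := by
    have h := intervalIntegral.integral_comp_neg (a := (1:ℝ)) (b := 0)
      (f := fun p => (Real.exp p - 1) / p)
    rw [neg_zero] at h
    rw [← h, intervalIntegral.integral_symm, ← intervalIntegral.integral_of_le zero_le_one]
    congr 1
    refine intervalIntegral.integral_congr fun x hx => ?_
    rw [show (Real.exp (-x) - 1) / (-x) = (1 - Real.exp (-x)) / x by
      rw [← neg_div_neg_eq]; ring_nf]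
  rw [hT1, hT2, ftc_Ioi] at *
  linarith [ftc_Ioc, hsplit]
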